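/- Let k be a field of characteristic ≠ 2 and let φ, φ' be odd-dimensional quadratic forms over k of the same dimension r with trivial discriminant. Let a, λ be nonzero elements of a field extension L of k, and suppose ⟨⟨a⟩⟩⊗φ'_L ≅ ⟨λ⟩·⟨⟨a⟩⟩⊗φ_L. Then the quaternion class (λ, a) is trivial in Br(L), and hence λ is represented by ⟨1,−a⟩ over L and ⟨λ⟩·⟨⟨a⟩⟩ ≅ ⟨⟨a⟩⟩, so that ⟨⟨a⟩⟩⊗φ'_L ≅ ⟨⟨a⟩⟩⊗φ_L. -/

import Mathlib

open scoped BigOperators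

/-- The diagonal quadratic form with weights `w`, as a function on `ι → K`. -/
def diagQF {K : Type} [Field K] {ι : Type} [Fintype ι] (w : ι → K) : (ι → K) → K :=
  fun v => ∑ i, w i * v i ^ 2

/-- `c` is a value represented by the diagonal quadratic form with weights `w`. -/
def RepresentsQF {K : Type} [Field K] {ι : Type} [Fintype ι] (w : ι → K) (c : K) : Prop :=
  ∃ v, diagQF w v = c

/-- Isometry (isomorphism) of diagonal quadratic forms. -/
def QFEquiv (K : Type) [Field K] {ι κ : Type} [Fintype ι] [Fintype κ]
    (w : ι → K) (w' : κ → K) : Prop :=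
  ∃ e : (ι → K) ≃ₗ[K] (κ → K), ∀ v, diagQF w' (e v) = diagQF w v

/-- Scaling a diagonal quadratic form by `c` : the form `⟨c⟩·q`. -/
def smulW {K : Type} [Field K] {ι : Type} (c : K) (w : ι → K) : ι → K := fun i => c * w i

/-- Tensor product of diagonal quadratic forms. -/
def tensorW {K : Type} [Field K] {ι κ : Type} (w₁ : ι → K) (w₂ : κ → K) : ι × κ → K :=
  fun p => w₁ p.1 * w₂ p.2

/-- The 1-fold Pfister form `⟨⟨a⟩⟩ = ⟨1, -a⟩`. -/
def pf1 {K : Type} [Field K] (a : K) : Fin 2 → K := ![1, -a]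

/-- The 2-fold Pfister form `⟨⟨a, d⟩⟩ = ⟨1,-a⟩ ⊗ ⟨1,-d⟩`. -/
def pf2 {K : Type} [Field K] (a d : K) : Fin 2 × Fin 2 → K := tensorW (pf1 a) (pf1 d)

/-- The n-fold Pfister form `⟨⟨a 0, …, a (n-1)⟩⟩`. -/
def pfW {K : Type} [Field K] {n : ℕ} (a : Fin n → K) : (Fin n → Fin 2) → K :=
  fun f => ∏ i, if f i = 0 then 1 else -a i

/-- Orthogonal sum of diagonal quadratic forms. -/
def orthW {K : Type} [Field K] {ι κ : Type} (w₁ : ι → K) (w₂ : κ → K) : ι ⊕ κ → K :=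
  Sum.elim w₁ w₂

/-- The weights of an orthogonal sum of `m` hyperbolic planes. -/
def hypW (K : Type) [Field K] (m : ℕ) : Fin m ⊕ Fin m → K :=
  Sum.elim (fun _ => 1) (fun _ => -1)

/-- Witt equivalence of diagonal quadratic forms: they become isometric after
adding hyperbolic planes. -/
def WittEquiv (K : Type) [Field K] {ι κ : Type} [Fintype ι] [Fintype κ]
    (w : ι → K) (w' : κ → K) : Prop :=
  ∃ m m' : ℕ, QFEquiv K (orthW w (hypW K m)) (orthW w' (hypW K m'))

/-- A diagonal quadratic form is anisotropic. -/
def AnisotropicQF {K : Type} [Field K] {ι : Type} [Fintype ι] (w : ι → K) : Prop :=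
  ∀ v, diagQF w v = 0 → v = 0

/-- Base change of a diagonal quadratic form along a field extension. -/
def bcW {k K : Type} [Field k] [Field K] [Algebra k K] {ι : Type} (w : ι → k) : ι → K :=
  fun i => algebraMap k K (w i)


section Infra
variable {F : Type} [Field F]
variable {ι κ ι' κ' : Type} [Fintype ι] [Fintype κ] [Fintype ι'] [Fintype κ']

/-! ### Basic diagQF lemmas -/

lemma diagQF_def (w : ι → F) (v : ι → F) : diagQF w v = ∑ i, w i * v i ^ 2 := rfl

lemma diagQF_orthW (w₁ : ι → F) (w₂ : κ → F) (v : ι ⊕ κ → F) :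
    diagQF (orthW w₁ w₂) v = diagQF w₁ (v ∘ Sum.inl) + diagQF w₂ (v ∘ Sum.inr) := by
  simp [diagQF, Fintype.sum_sum_type, orthW]

lemma diagQF_smulW (c : F) (w : ι → F) (v : ι → F) :
    diagQF (smulW c w) v = c * diagQF w v := by
  simp [diagQF, smulW, Finset.mul_sum, mul_assoc]

lemma diagQF_pair (x y : F) (v : Fin 2 → F) :
    diagQF ![x, y] v = x * v 0 ^ 2 + y * v 1 ^ 2 := by
  simp [diagQF, Fin.sum_univ_two]

lemma diagQF_unit (c : F) (v : Unit → F) :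
    diagQF (fun _ : Unit => c) v = c * (v ()) ^ 2 := by
  simp [diagQF]

/-! ### The bilinear form -/

def dBF (w : ι → F) (v u : ι → F) : F := ∑ i, w i * v i * u i

lemma dBF_self (w : ι → F) (v : ι → F) : dBF w v v = diagQF w v :=
  Finset.sum_congr rfl fun i _ => by ring

lemma dBF_comm (w : ι → F) (v u : ι → F) : dBF w v u = dBF w u v :=
  Finset.sum_congr rfl fun i _ => by ring

lemma dBF_add_left (w : ι → F) (v v' u : ι → F) :
    dBF w (v + v') u = dBF w v u + dBF w v' u := by
  rw [dBF, dBF, dBF, ← Finset.sum_add_distrib]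
  exact Finset.sum_congr rfl fun i _ => by simp only [Pi.add_apply]; ring

lemma dBF_smul_left (w : ι → F) (t : F) (v u : ι → F) :
    dBF w (t • v) u = t * dBF w v u := by
  rw [dBF, dBF, Finset.mul_sum]
  exact Finset.sum_congr rfl fun i _ => by simp only [Pi.smul_apply, smul_eq_mul]; ring

lemma diagQF_add (w : ι → F) (v u : ι → F) :
    diagQF w (v + u) = diagQF w v + diagQF w u + 2 * dBF w v u := by
  rw [diagQF, diagQF, diagQF, dBF, Finset.mul_sum, ← Finset.sum_add_distrib,
    ← Finset.sum_add_distrib]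
  exact Finset.sum_congr rfl fun i _ => by simp only [Pi.add_apply]; ring

lemma diagQF_add_smul (w : ι → F) (v u : ι → F) (t : F) :
    diagQF w (v + t • u) = diagQF w v + 2 * t * dBF w v u + t ^ 2 * diagQF w u := by
  rw [diagQF, diagQF, diagQF, dBF, Finset.mul_sum, Finset.mul_sum,
    ← Finset.sum_add_distrib, ← Finset.sum_add_distrib]
  exact Finset.sum_congr rfl fun i _ => by
    simp only [Pi.add_apply, Pi.smul_apply, smul_eq_mul]; ring

lemma diagQF_sub_smul (w : ι → F) (v u : ι → F) (t : F) :
    diagQF w (v - t • u) = diagQF w v - 2 * t * dBF w v u + t ^ 2 * diagQF w u := by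
  have := diagQF_add_smul w v u (-t)
  simpa [sub_eq_add_neg, neg_smul] using this

/-- a linear map preserving the quadratic forms preserves the bilinear forms -/
lemma dBF_of_isometry (h2 : (2 : F) ≠ 0) {w : ι → F} {w' : κ → F}
    (f : (ι → F) →ₗ[F] (κ → F)) (hf : ∀ v, diagQF w' (f v) = diagQF w v)
    (v u : ι → F) : dBF w' (f v) (f u) = dBF w v u := by
  have h1 : diagQF w' (f v + f u) = diagQF w' (f v) + diagQF w' (f u) + 2 * dBF w' (f v) (f u) :=
    diagQF_add _ _ _
  have h2' : diagQF w (v + u) = diagQF w v + diagQF w u + 2 * dBF w v u := diagQF_add _ _ _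
  rw [← f.map_add] at h1
  rw [hf, hf, hf] at h1
  rw [h2'] at h1
  exact mul_left_cancel₀ h2 (by linear_combination -h1 :
    2 * dBF w' (f v) (f u) = 2 * dBF w v u)

/-! ### QFEquiv calculus -/

lemma QFEquiv.refl (w : ι → F) : QFEquiv F w w :=
  ⟨LinearEquiv.refl F _, fun _ => rfl⟩

lemma QFEquiv.symm {w : ι → F} {w' : κ → F} (h : QFEquiv F w w') : QFEquiv F w' w := by
  obtain ⟨e, he⟩ := h
  exact ⟨e.symm, fun v => by rw [← he (e.symm v), e.apply_symm_apply]⟩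

lemma QFEquiv.trans {w : ι → F} {w' : κ → F} {w'' : ι' → F}
    (h : QFEquiv F w w') (h' : QFEquiv F w' w'') : QFEquiv F w w'' := by
  obtain ⟨e, he⟩ := h; obtain ⟨e', he'⟩ := h'
  exact ⟨e.trans e', fun v => by simp [LinearEquiv.trans_apply, he', he]⟩

/-- reindexing along an equivalence of index types -/
lemma QFEquiv.reindex {w : ι → F} {w' : κ → F} (σ : ι ≃ κ)
    (h : ∀ i, w i = w' (σ i)) : QFEquiv F w w' := by
  refine ⟨LinearEquiv.funCongrLeft F F σ.symm, fun v => ?_⟩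
  have : ∀ j, (LinearEquiv.funCongrLeft F F σ.symm v) j = v (σ.symm j) := fun j => rfl
  simp only [diagQF, this]
  rw [← Equiv.sum_comp σ (fun j => w' j * v (σ.symm j) ^ 2)]
  exact Finset.sum_congr rfl fun i _ => by rw [← h i, Equiv.symm_apply_apply]

lemma QFEquiv.represents {w : ι → F} {w' : κ → F} (h : QFEquiv F w w') {c : F}
    (hc : RepresentsQF w c) : RepresentsQF w' c := by
  obtain ⟨e, he⟩ := h; obtain ⟨v, hv⟩ := hc
  exact ⟨e v, by rw [he, hv]⟩

lemma QFEquiv.isotropic {w : ι → F} {w' : κ → F} (h : QFEquiv F w w')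
    (hc : ∃ v, v ≠ 0 ∧ diagQF w v = 0) : ∃ v, v ≠ 0 ∧ diagQF w' v = 0 := by
  obtain ⟨e, he⟩ := h; obtain ⟨v, hv0, hv⟩ := hc
  exact ⟨e v, by simpa using hv0, by rw [he, hv]⟩

lemma QFEquiv.card_eq {w : ι → F} {w' : κ → F} (h : QFEquiv F w w') :
    Fintype.card ι = Fintype.card κ := by
  obtain ⟨e, -⟩ := h
  have := e.finrank_eq
  simpa [Module.finrank_pi] using this

end Infra

section Infra2
variable {F : Type} [Field F]
variable {ι κ ι' κ' : Type} [Fintype ι] [Fintype κ] [Fintype ι'] [Fintype κ']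

/-- explicit 2×2 linear equivalence -/
def lin2 (p q r s : F) (h : p * s - q * r ≠ 0) : (Fin 2 → F) ≃ₗ[F] (Fin 2 → F) := by
  refine LinearEquiv.ofLinear
    { toFun := fun v => ![p * v 0 + q * v 1, r * v 0 + s * v 1]
      map_add' := fun v u => by
        funext j; fin_cases j <;> simp [Pi.add_apply] <;> ring
      map_smul' := fun t v => by
        funext j; fin_cases j <;> simp [Pi.smul_apply, smul_eq_mul] <;> ring }
    { toFun := fun v => ![(s * v 0 - q * v 1) / (p * s - q * r),
        (-r * v 0 + p * v 1) / (p * s - q * r)]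
      map_add' := fun v u => by
        funext j; fin_cases j <;> simp [Pi.add_apply] <;> ring
      map_smul' := fun t v => by
        funext j; fin_cases j <;> simp [Pi.smul_apply, smul_eq_mul] <;> ring }
    ?_ ?_ <;>
  · apply LinearMap.ext; intro v
    funext j; fin_cases j <;>
      · simp only [LinearMap.comp_apply, LinearMap.coe_mk, AddHom.coe_mk, LinearMap.id_apply,
          Fin.zero_eta, Fin.mk_one, Matrix.cons_val_zero, Matrix.cons_val_one, Matrix.head_cons]
        have h1 : s * p - q * r ≠ 0 := by rwa [mul_comm s p]
        have h2 : s * p - r * q ≠ 0 := by rwa [mul_comm s p, mul_comm r q]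
        have h3 : p * s - r * q ≠ 0 := by rwa [mul_comm r q]
        field_simp
        ring

lemma lin2_apply (p q r s : F) (h : p * s - q * r ≠ 0) (v : Fin 2 → F) :
    lin2 p q r s h v = ![p * v 0 + q * v 1, r * v 0 + s * v 1] := rfl

/-- scaling each coordinate by a unit -/
lemma QFEquiv.scale {w : ι → F} (u : ι → F) (hu : ∀ i, u i ≠ 0) :
    QFEquiv F w (fun i => w i * u i ^ 2) := by
  refine ⟨LinearEquiv.ofLinear
    { toFun := fun v i => v i * (u i)⁻¹
      map_add' := fun v v' => by funext i; simp [Pi.add_apply]; ring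
      map_smul' := fun t v => by funext i; simp [Pi.smul_apply, smul_eq_mul]; ring }
    { toFun := fun v i => v i * u i
      map_add' := fun v v' => by funext i; simp [Pi.add_apply]; ring
      map_smul' := fun t v => by funext i; simp [Pi.smul_apply, smul_eq_mul]; ring }
    ?_ ?_, ?_⟩
  · apply LinearMap.ext; intro v; funext i
    simp only [LinearMap.comp_apply, LinearMap.coe_mk, AddHom.coe_mk, LinearMap.id_apply]
    field_simp
    rw [mul_div_assoc, div_self (hu i), mul_one]
  · apply LinearMap.ext; intro v; funext i
    simp only [LinearMap.comp_apply, LinearMap.coe_mk, AddHom.coe_mk, LinearMap.id_apply]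
    field_simp
    rw [mul_div_assoc, div_self (hu i), mul_one]
  · intro v
    refine Finset.sum_congr rfl fun i _ => ?_
    have := hu i
    simp only [LinearEquiv.ofLinear_apply, LinearMap.coe_mk, AddHom.coe_mk]
    field_simp

/-- congruence for orthogonal sums -/
lemma QFEquiv.orth {w₁ : ι → F} {w₁' : ι' → F} {w₂ : κ → F} {w₂' : κ' → F}
    (h₁ : QFEquiv F w₁ w₁') (h₂ : QFEquiv F w₂ w₂') :
    QFEquiv F (orthW w₁ w₂) (orthW w₁' w₂') := by
  obtain ⟨e₁, he₁⟩ := h₁; obtain ⟨e₂, he₂⟩ := h₂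
  refine ⟨(LinearEquiv.sumArrowLequivProdArrow ι κ F F).trans
    ((e₁.prodCongr e₂).trans (LinearEquiv.sumArrowLequivProdArrow ι' κ' F F).symm), fun v => ?_⟩
  rw [diagQF_orthW, diagQF_orthW]
  have h1 : ∀ x : (ι' → F) × (κ' → F),
      ((LinearEquiv.sumArrowLequivProdArrow ι' κ' F F).symm x) ∘ Sum.inl = x.1 := fun x => rfl
  have h2 : ∀ x : (ι' → F) × (κ' → F),
      ((LinearEquiv.sumArrowLequivProdArrow ι' κ' F F).symm x) ∘ Sum.inr = x.2 := fun x => rfl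
  simp only [LinearEquiv.trans_apply, h1, h2, LinearEquiv.prodCongr_apply]
  rw [he₁, he₂]
  rfl

/-- congruence for tensor products (second factor) -/
lemma QFEquiv.tensorRight (τ : κ → F) {w : ι → F} {w' : ι' → F} (h : QFEquiv F w w') :
    QFEquiv F (tensorW τ w) (tensorW τ w') := by
  obtain ⟨e, he⟩ := h
  refine ⟨(LinearEquiv.curry F F κ ι).trans
    ((LinearEquiv.piCongrRight fun _ : κ => e).trans (LinearEquiv.curry F F κ ι').symm), fun v => ?_⟩
  have happ : ∀ (p : κ × ι'),
      ((LinearEquiv.curry F F κ ι').symm ((LinearEquiv.piCongrRight fun _ : κ => e)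
        ((LinearEquiv.curry F F κ ι) v))) p = e (fun i => v (p.1, i)) p.2 := fun p => rfl
  simp only [LinearEquiv.trans_apply] at happ ⊢
  rw [diagQF_def, diagQF_def, Fintype.sum_prod_type, Fintype.sum_prod_type]
  refine Finset.sum_congr rfl fun j _ => ?_
  have : ∑ i : ι', tensorW τ w' (j, i) * ((LinearEquiv.curry F F κ ι').symm
      ((LinearEquiv.piCongrRight fun _ : κ => e) ((LinearEquiv.curry F F κ ι) v)) (j, i)) ^ 2
      = τ j * diagQF w' (e fun i => v (j, i)) := by
    rw [diagQF_def, Finset.mul_sum]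
    refine Finset.sum_congr rfl fun i _ => ?_
    rw [happ (j, i)]
    simp [tensorW]; ring
  rw [this, he]
  rw [diagQF_def, Finset.mul_sum]
  refine Finset.sum_congr rfl fun i _ => ?_
  simp [tensorW]; ring

lemma QFEquiv.orth_comm (w₁ : ι → F) (w₂ : κ → F) :
    QFEquiv F (orthW w₁ w₂) (orthW w₂ w₁) :=
  QFEquiv.reindex (Equiv.sumComm ι κ) (by rintro (i | j) <;> rfl)

lemma QFEquiv.orth_assoc (w₁ : ι → F) (w₂ : κ → F) (w₃ : ι' → F) :
    QFEquiv F (orthW (orthW w₁ w₂) w₃) (orthW w₁ (orthW w₂ w₃)) :=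
  QFEquiv.reindex (Equiv.sumAssoc ι κ ι') (by rintro ((i | j) | l) <;> rfl)

lemma QFEquiv.hyp_merge (m₁ m₂ : ℕ) :
    QFEquiv F (orthW (hypW F m₁) (hypW F m₂)) (hypW F (m₁ + m₂)) := by
  refine QFEquiv.reindex ((Equiv.sumSumSumComm (Fin m₁) (Fin m₁) (Fin m₂) (Fin m₂)).trans
    (Equiv.sumCongr finSumFinEquiv finSumFinEquiv)) ?_
  rintro ((i | j) | (l | m)) <;> rfl

lemma QFEquiv.const_pm_hyp :
    QFEquiv F (orthW (fun _ : ι => (1 : F)) (fun _ : ι => (-1 : F)))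
      (hypW F (Fintype.card ι)) := by
  refine QFEquiv.reindex (Equiv.sumCongr (Fintype.equivFin ι) (Fintype.equivFin ι)) ?_
  rintro (i | j) <;> rfl

end Infra2

section Infra3
open Matrix in
lemma matrix_transpose_note : True := trivial
variable {F : Type} [Field F]
variable {ι κ ι' κ' : Type} [Fintype ι] [Fintype κ] [Fintype ι'] [Fintype κ']

/-- determinants of equivalent diagonal forms agree modulo squares -/
lemma QFEquiv.prod_eq (h2 : (2 : F) ≠ 0) {w : ι → F} {w' : κ → F} (h : QFEquiv F w w') :
    ∃ u : F, u ≠ 0 ∧ ∏ i, w i = u ^ 2 * ∏ j, w' j := by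
  classical
  obtain σ := Fintype.equivOfCardEq h.card_eq
  have hre : QFEquiv F (w' ∘ σ) w' := QFEquiv.reindex σ (fun i => rfl)
  have h' : QFEquiv F w (w' ∘ σ) := h.trans hre.symm
  have hprod : ∏ i, (w' ∘ σ) i = ∏ j, w' j := Equiv.prod_comp σ w'
  rw [← hprod]
  set w'' := w' ∘ σ with hw''
  obtain ⟨e, he⟩ := h'
  have hB : ∀ v u : ι → F, dBF w'' (e v) (e u) = dBF w v u := by
    intro v u
    exact dBF_of_isometry h2 e.toLinearMap (fun v => he v) v u
  set M := LinearMap.toMatrix (Pi.basisFun F ι) (Pi.basisFun F ι) e.toLinearMap with hM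
  have hMa : ∀ l i, M l i = e (Pi.single i 1) l := by
    intro l i
    rw [hM, LinearMap.toMatrix_apply, Pi.basisFun_repr, Pi.basisFun_apply]
    rfl
  have hsingle : ∀ i j : ι, dBF w (Pi.single i 1) (Pi.single j 1) = Matrix.diagonal w i j := by
    intro i j
    rw [dBF, Matrix.diagonal_apply]
    rw [Finset.sum_eq_single i]
    · by_cases hij : i = j <;> simp [hij, Pi.single_apply]
    · intro l _ hl; simp [Pi.single_apply, hl]
    · intro hl; exact absurd (Finset.mem_univ i) hl
  have key : M.transpose * (Matrix.diagonal w'' * M) = Matrix.diagonal w := by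
    ext i j
    rw [← hsingle i j, ← hB]
    rw [Matrix.mul_apply, dBF]
    refine Finset.sum_congr rfl fun l _ => ?_
    rw [Matrix.diagonal_mul, Matrix.transpose_apply, hMa, hMa]
    ring
  have hdet := congrArg Matrix.det key
  rw [Matrix.det_mul, Matrix.det_mul, Matrix.det_transpose, Matrix.det_diagonal,
    Matrix.det_diagonal] at hdet
  refine ⟨M.det, ?_, ?_⟩
  · set N := LinearMap.toMatrix (Pi.basisFun F ι) (Pi.basisFun F ι) e.symm.toLinearMap with hN
    have hcomp : e.toLinearMap ∘ₗ e.symm.toLinearMap = LinearMap.id := by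
      apply LinearMap.ext; intro v; simp
    have : M * N = 1 := by
      rw [hM, hN, ← LinearMap.toMatrix_comp (Pi.basisFun F ι) (Pi.basisFun F ι), hcomp,
        LinearMap.toMatrix_id]
    intro h0
    have := congrArg Matrix.det this
    rw [Matrix.det_mul, h0, Matrix.det_one, zero_mul] at this
    exact zero_ne_one this
  · rw [← hdet]; ring

/-- pointwise pairing congruence on `ι ⊕ ι` -/
lemma QFEquiv.pairSum {w₁ w₂ w₁' w₂' : ι → F}
    (e : ∀ _ : ι, (Fin 2 → F) ≃ₗ[F] (Fin 2 → F))
    (he : ∀ i x, diagQF ![w₁' i, w₂' i] (e i x) = diagQF ![w₁ i, w₂ i] x) :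
    QFEquiv F (orthW w₁ w₂) (orthW w₁' w₂') := by
  have pair_eta : ∀ f : Fin 2 → F, ![f 0, f 1] = f := by
    intro f; funext j; fin_cases j <;> rfl
  have pair_add : ∀ x y c d : F, (![x + c, y + d] : Fin 2 → F) = ![x, y] + ![c, d] := by
    intro x y c d; funext j; fin_cases j <;> simp
  have pair_smul : ∀ t x y : F, (![t * x, t * y] : Fin 2 → F) = t • ![x, y] := by
    intro t x y; funext j; fin_cases j <;> simp
  refine ⟨LinearEquiv.ofLinear
    { toFun := fun v => Sum.elim (fun i => e i ![v (Sum.inl i), v (Sum.inr i)] 0)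
        (fun i => e i ![v (Sum.inl i), v (Sum.inr i)] 1)
      map_add' := fun v u => by
        funext s; cases s with
        | inl i => simp only [Sum.elim_inl, Pi.add_apply, pair_add, map_add]
        | inr i => simp only [Sum.elim_inr, Pi.add_apply, pair_add, map_add]
      map_smul' := fun t v => by
        funext s; cases s with
        | inl i => simp only [Sum.elim_inl, Pi.smul_apply, smul_eq_mul, pair_smul, map_smul,
            RingHom.id_apply]
        | inr i => simp only [Sum.elim_inr, Pi.smul_apply, smul_eq_mul, pair_smul, map_smul,
            RingHom.id_apply] }
    { toFun := fun v => Sum.elim (fun i => (e i).symm ![v (Sum.inl i), v (Sum.inr i)] 0)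
        (fun i => (e i).symm ![v (Sum.inl i), v (Sum.inr i)] 1)
      map_add' := fun v u => by
        funext s; cases s with
        | inl i => simp only [Sum.elim_inl, Pi.add_apply, pair_add, map_add]
        | inr i => simp only [Sum.elim_inr, Pi.add_apply, pair_add, map_add]
      map_smul' := fun t v => by
        funext s; cases s with
        | inl i => simp only [Sum.elim_inl, Pi.smul_apply, smul_eq_mul, pair_smul, map_smul,
            RingHom.id_apply]
        | inr i => simp only [Sum.elim_inr, Pi.smul_apply, smul_eq_mul, pair_smul, map_smul,
            RingHom.id_apply] }
    ?_ ?_, ?_⟩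
  · apply LinearMap.ext; intro v; funext s
    cases s with
    | inl i =>
        simp only [LinearMap.comp_apply, LinearMap.coe_mk, AddHom.coe_mk, LinearMap.id_apply,
          Sum.elim_inl, Sum.elim_inr]
        rw [pair_eta ((e i).symm ![v (Sum.inl i), v (Sum.inr i)])]
        rw [LinearEquiv.apply_symm_apply]
        rfl
    | inr i =>
        simp only [LinearMap.comp_apply, LinearMap.coe_mk, AddHom.coe_mk, LinearMap.id_apply,
          Sum.elim_inl, Sum.elim_inr]
        rw [pair_eta ((e i).symm ![v (Sum.inl i), v (Sum.inr i)])]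
        rw [LinearEquiv.apply_symm_apply]
        rfl
  · apply LinearMap.ext; intro v; funext s
    cases s with
    | inl i =>
        simp only [LinearMap.comp_apply, LinearMap.coe_mk, AddHom.coe_mk, LinearMap.id_apply,
          Sum.elim_inl, Sum.elim_inr]
        rw [pair_eta ((e i) ![v (Sum.inl i), v (Sum.inr i)])]
        rw [LinearEquiv.symm_apply_apply]
        rfl
    | inr i =>
        simp only [LinearMap.comp_apply, LinearMap.coe_mk, AddHom.coe_mk, LinearMap.id_apply,
          Sum.elim_inl, Sum.elim_inr]
        rw [pair_eta ((e i) ![v (Sum.inl i), v (Sum.inr i)])]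
        rw [LinearEquiv.symm_apply_apply]
        rfl
  · intro v
    simp only [LinearEquiv.ofLinear_apply, LinearMap.coe_mk, AddHom.coe_mk]
    rw [diagQF_orthW, diagQF_orthW]
    rw [diagQF_def, diagQF_def, diagQF_def, diagQF_def, ← Finset.sum_add_distrib,
      ← Finset.sum_add_distrib]
    refine Finset.sum_congr rfl fun i _ => ?_
    have h1 := he i ![v (Sum.inl i), v (Sum.inr i)]
    rw [diagQF_pair, diagQF_pair] at h1
    simpa using h1

/-- splitting `q ⊥ -q` -/
lemma pm_det {F : Type} [Field F] (h2 : (2 : F) ≠ 0) {c : F} (hc : c ≠ 0) :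
    (c + 1) / 2 * ((c + 1) / 2) - (c - 1) / 2 * ((c - 1) / 2) ≠ 0 := by
  have : (c + 1) / 2 * ((c + 1) / 2) - (c - 1) / 2 * ((c - 1) / 2) = c := by
    field_simp; ring
  rw [this]; exact hc

lemma split_pm (h2 : (2 : F) ≠ 0) {w : ι → F} (hw : ∀ i, w i ≠ 0) :
    QFEquiv F (orthW w (smulW (-1) w)) (orthW (fun _ : ι => (1 : F)) (fun _ : ι => (-1 : F))) := by
  refine QFEquiv.pairSum (fun i => lin2 ((w i + 1) / 2) ((w i - 1) / 2) ((w i - 1) / 2)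
    ((w i + 1) / 2) (pm_det h2 (hw i))) ?_
  · intro i x
    rw [lin2_apply, diagQF_pair, diagQF_pair]
    simp only [Matrix.cons_val_zero, Matrix.cons_val_one, Matrix.head_cons, smulW]
    field_simp
    ring

/-- modifying a form in two slots -/
lemma QFEquiv.twoSlot [DecidableEq ι] {ψ ψ' : ι → F} (i₀ i₁ : ι) (hne : i₀ ≠ i₁)
    (hoff : ∀ i, i ≠ i₀ → i ≠ i₁ → ψ' i = ψ i)
    (h : QFEquiv F ![ψ i₀, ψ i₁] ![ψ' i₀, ψ' i₁]) : QFEquiv F ψ ψ' := by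
  set p : ι → Prop := fun i => i = i₀ ∨ i = i₁ with hp
  have : DecidablePred p := fun i => instDecidableOr
  set e₂ : {i // p i} ≃ Fin 2 :=
    { toFun := fun x => if x.1 = i₀ then 0 else 1
      invFun := fun j => if j = 0 then ⟨i₀, Or.inl rfl⟩ else ⟨i₁, Or.inr rfl⟩
      left_inv := by
        rintro ⟨i, hi | hi⟩ <;> subst hi <;> simp [hne, hne.symm]
      right_inv := by
        intro j; fin_cases j <;> simp [hne, hne.symm] } with he₂
  set σ : (Fin 2 ⊕ {i // ¬ p i}) ≃ ι :=
    (Equiv.sumCongr e₂.symm (Equiv.refl _)).trans (Equiv.sumCompl p) with hσ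
  have hA : QFEquiv F (orthW ![ψ i₀, ψ i₁] (fun x : {i // ¬ p i} => ψ x.1)) ψ := by
    refine QFEquiv.reindex σ ?_
    rintro (j | x)
    · fin_cases j <;> simp [hσ, he₂, Equiv.sumCompl, hne, orthW]
    · rfl
  have hB : QFEquiv F (orthW ![ψ' i₀, ψ' i₁] (fun x : {i // ¬ p i} => ψ' x.1)) ψ' := by
    refine QFEquiv.reindex σ ?_
    rintro (j | x)
    · fin_cases j <;> simp [hσ, he₂, Equiv.sumCompl, hne, orthW]
    · rfl
  have hrest : (fun x : {i // ¬ p i} => ψ' x.1) = (fun x : {i // ¬ p i} => ψ x.1) := by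
    funext x
    exact hoff x.1 (fun hh => x.2 (Or.inl hh)) (fun hh => x.2 (Or.inr hh))
  rw [hrest] at hB
  exact hA.symm.trans ((QFEquiv.orth h (QFEquiv.refl _)).trans hB)

/-- a binary form is equivalent to one with a represented value in the first slot -/
lemma binaryRep {p q a0 b0 : F} (hb : p * a0 ^ 2 + q * b0 ^ 2 ≠ 0) :
    QFEquiv F ![p, q] ![p * a0 ^ 2 + q * b0 ^ 2, p * q * (p * a0 ^ 2 + q * b0 ^ 2)] := by
  have hdet : a0 * (p * a0) - -(q * b0) * b0 ≠ 0 := by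
    intro h0; apply hb; rw [← h0]; ring
  refine QFEquiv.symm ⟨lin2 a0 (-(q * b0)) b0 (p * a0) hdet, fun v => ?_⟩
  rw [lin2_apply, diagQF_pair, diagQF_pair]
  simp only [Matrix.cons_val_zero, Matrix.cons_val_one, Matrix.head_cons]
  ring

/-- multiplication by a represented value of the Pfister form `⟨1, -a⟩` -/
lemma norm_mul_pf1 {a n x y : F} (hn : n ≠ 0) (hxy : n = x ^ 2 - a * y ^ 2) :
    QFEquiv F (smulW n (pf1 a)) (pf1 a) := by
  have hdet : x * x - a * y * y ≠ 0 := by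
    intro h0; apply hn; rw [hxy, ← h0]; ring
  refine ⟨lin2 x (a * y) y x hdet, fun v => ?_⟩
  rw [lin2_apply, diagQF_smulW]
  rw [show pf1 a = ![1, -a] from rfl, diagQF_pair, diagQF_pair]
  simp only [Matrix.cons_val_zero, Matrix.cons_val_one, Matrix.head_cons]
  rw [hxy]
  ring

end Infra3

section Infra4
variable {F : Type} [Field F]
variable {ι κ : Type} [Fintype ι] [Fintype κ]

lemma diagQF_zero (w : ι → F) : diagQF w 0 = 0 := by simp [diagQF]

lemma diagQF_smul (w : ι → F) (t : F) (v : ι → F) :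
    diagQF w (t • v) = t ^ 2 * diagQF w v := by
  rw [diagQF, diagQF, Finset.mul_sum]
  exact Finset.sum_congr rfl fun i _ => by simp [Pi.smul_apply, smul_eq_mul]; ring

lemma dBF_sub_right (w : ι → F) (v u u' : ι → F) :
    dBF w v (u - u') = dBF w v u - dBF w v u' := by
  rw [dBF_comm, sub_eq_add_neg, dBF_add_left, dBF_comm w u v]
  have : -u' = (-1 : F) • u' := by funext i; simp
  rw [this, dBF_smul_left, dBF_comm w u' v]; ring

lemma dBF_add_right (w : ι → F) (v u u' : ι → F) :
    dBF w v (u + u') = dBF w v u + dBF w v u' := by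
  rw [dBF_comm, dBF_add_left, dBF_comm w u v, dBF_comm w u' v]

lemma dBF_sub_left (w : ι → F) (v v' u : ι → F) :
    dBF w (v - v') u = dBF w v u - dBF w v' u := by
  rw [dBF_comm, dBF_sub_right, dBF_comm w u v, dBF_comm w u v']

lemma dBF_zero_right (w : ι → F) (v : ι → F) : dBF w v 0 = 0 := by simp [dBF]

lemma dBF_orthW (w₁ : ι → F) (w₂ : κ → F) (v u : ι ⊕ κ → F) :
    dBF (orthW w₁ w₂) v u
      = dBF w₁ (v ∘ Sum.inl) (u ∘ Sum.inl) + dBF w₂ (v ∘ Sum.inr) (u ∘ Sum.inr) := by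
  simp [dBF, Fintype.sum_sum_type, orthW]

lemma dBF_single_right [DecidableEq ι] (w : ι → F) (v : ι → F) (i₀ : ι) :
    dBF w v (Pi.single i₀ 1) = w i₀ * v i₀ := by
  rw [dBF, Finset.sum_eq_single i₀]
  · simp
  · intro l _ hl; simp [Pi.single_apply, hl]
  · intro hl; exact absurd (Finset.mem_univ i₀) hl

lemma diagQF_single [DecidableEq ι] (w : ι → F) (i₀ : ι) :
    diagQF w (Pi.single i₀ 1) = w i₀ := by
  rw [← dBF_self, dBF_single_right]
  simp

/-- reflection in the hyperplane orthogonal to `u` -/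
noncomputable def reflQF (w : ι → F) (u : ι → F) (hu : diagQF w u ≠ 0) :
    (ι → F) ≃ₗ[F] (ι → F) :=
  LinearEquiv.ofInvolutive
    { toFun := fun v => v - (2 * dBF w v u / diagQF w u) • u
      map_add' := fun v v' => by
        simp only [dBF_add_left]
        rw [mul_add, add_div, add_smul]
        abel
      map_smul' := fun t v => by
        simp only [dBF_smul_left, RingHom.id_apply, smul_sub, smul_smul]
        congr 1
        congr 1
        field_simp }
    (by
      intro v
      simp only [LinearMap.coe_mk, AddHom.coe_mk]
      rw [dBF_sub_left, dBF_smul_left, dBF_self]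
      have hcoef : 2 * (dBF w v u - 2 * dBF w v u / diagQF w u * diagQF w u) / diagQF w u
          = -(2 * dBF w v u / diagQF w u) := by
        field_simp
        ring
      rw [hcoef, neg_smul, sub_neg_eq_add, sub_add_cancel])

lemma reflQF_apply (w : ι → F) (u : ι → F) (hu : diagQF w u ≠ 0) (v : ι → F) :
    reflQF w u hu v = v - (2 * dBF w v u / diagQF w u) • u := rfl

lemma reflQF_isom (w : ι → F) (u : ι → F) (hu : diagQF w u ≠ 0) (v : ι → F) :
    diagQF w (reflQF w u hu v) = diagQF w v := by
  rw [reflQF_apply, sub_eq_add_neg, ← neg_smul, diagQF_add_smul]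
  field_simp
  ring

/-- the isometry group acts transitively on vectors with equal nonzero values -/
lemma isometry_transitive (h2 : (2 : F) ≠ 0) (w : ι → F) (x y : ι → F)
    (hxy : diagQF w x = diagQF w y) (h0 : diagQF w y ≠ 0) :
    ∃ g : (ι → F) ≃ₗ[F] (ι → F), (∀ v, diagQF w (g v) = diagQF w v) ∧ g x = y := by
  have hQsub : diagQF w (x - y) = 2 * diagQF w y - 2 * dBF w x y := by
    rw [sub_eq_add_neg, show -y = (-1 : F) • y from by funext i; simp,
      diagQF_add_smul, hxy]
    ring
  by_cases h1 : diagQF w (x - y) ≠ 0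
  · refine ⟨reflQF w (x - y) h1, fun v => reflQF_isom w _ h1 v, ?_⟩
    rw [reflQF_apply]
    have hb : dBF w x (x - y) = diagQF w y - dBF w x y := by
      rw [dBF_sub_right, dBF_self, hxy, dBF_comm]
    have hcoef : 2 * dBF w x (x - y) / diagQF w (x - y) = 1 := by
      rw [hb, hQsub]
      rw [div_eq_one_iff_eq (by rw [← hQsub]; exact h1)]
      ring
    rw [hcoef, one_smul, sub_sub_cancel]
  · push_neg at h1
    have hQadd : diagQF w (x + y) = 4 * diagQF w y := by
      have : diagQF w (x + y) = 2 * diagQF w y + 2 * dBF w x y := by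
        rw [show x + y = x + (1 : F) • y from by funext i; simp, diagQF_add_smul, hxy]
        ring
      have h2' : 2 * dBF w x y = 2 * diagQF w y := by
        have := hQsub; rw [h1] at this; linear_combination this
      rw [this, h2']; ring
    have hQadd0 : diagQF w (x + y) ≠ 0 := by
      rw [hQadd]
      exact mul_ne_zero (by
        intro h4
        apply h2
        have : (4 : F) = 2 * 2 := by norm_num
        rw [this] at h4
        rcases mul_eq_zero.mp h4 with h | h <;> exact h) h0
    have g1x : reflQF w (x + y) hQadd0 x = -y := by
      rw [reflQF_apply]
      have hb : dBF w x (x + y) = diagQF w y + dBF w x y := by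
        rw [dBF_add_right, dBF_self, hxy, dBF_comm]
      have hcoef : 2 * dBF w x (x + y) / diagQF w (x + y) = 1 := by
        rw [hb, hQadd]
        rw [div_eq_one_iff_eq (by rw [← hQadd]; exact hQadd0)]
        have := hQsub; rw [h1] at this
        linear_combination this
      rw [hcoef, one_smul]
      funext i
      simp only [Pi.sub_apply, Pi.add_apply, Pi.neg_apply]
      ring
    have g2y : reflQF w y h0 (-y) = y := by
      rw [reflQF_apply]
      have : dBF w (-y) y = -diagQF w y := by
        rw [show -y = (-1 : F) • y from by funext i; simp, dBF_smul_left, dBF_self]; ring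
      rw [this]
      have hcoef : 2 * -diagQF w y / diagQF w y = -2 := by field_simp
      rw [hcoef]
      funext i
      simp only [Pi.sub_apply, Pi.smul_apply, Pi.neg_apply, smul_eq_mul]
      ring
    refine ⟨(reflQF w (x + y) hQadd0).trans (reflQF w y h0), fun v => ?_, ?_⟩
    · rw [LinearEquiv.trans_apply, reflQF_isom, reflQF_isom]
    · rw [LinearEquiv.trans_apply, g1x, g2y]

/-- Witt cancellation of a one-dimensional form -/
lemma cancel_unit (h2 : (2 : F) ≠ 0) {c : F} (hc : c ≠ 0) {w : ι → F} {w' : κ → F}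
    (h : QFEquiv F (orthW (fun _ : Unit => c) w) (orthW (fun _ : Unit => c) w')) :
    QFEquiv F w w' := by
  obtain ⟨f, hf⟩ := h
  set W : Unit ⊕ ι → F := orthW (fun _ : Unit => c) w with hW
  set W' : Unit ⊕ κ → F := orthW (fun _ : Unit => c) w' with hW'
  set x₀ : Unit ⊕ ι → F := Sum.elim (fun _ => 1) 0 with hx₀def
  set y₀ : Unit ⊕ κ → F := Sum.elim (fun _ => 1) 0 with hy₀def
  have hx₀ : diagQF W x₀ = c := by
    rw [hW, diagQF_orthW]
    have : x₀ ∘ Sum.inr = (0 : ι → F) := rfl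
    rw [this, diagQF_zero, diagQF_unit]
    simp [hx₀def]
  have hy₀ : diagQF W' y₀ = c := by
    rw [hW', diagQF_orthW]
    have : y₀ ∘ Sum.inr = (0 : κ → F) := rfl
    rw [this, diagQF_zero, diagQF_unit]
    simp [hy₀def]
  have hfx : diagQF W' (f x₀) = c := by rw [hf x₀, hx₀]
  obtain ⟨g, hg, hgx⟩ := isometry_transitive h2 W' (f x₀) y₀
    (by rw [hfx, hy₀]) (by rw [hy₀]; exact hc)
  set h' := f.trans g with hh'def
  have hh' : ∀ v, diagQF W' (h' v) = diagQF W v := fun v => by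
    rw [hh'def, LinearEquiv.trans_apply, hg, hf]
  have hx : h' x₀ = y₀ := by rw [hh'def, LinearEquiv.trans_apply, hgx]
  have hB : ∀ v u, dBF W' (h' v) (h' u) = dBF W v u := fun v u =>
    dBF_of_isometry h2 h'.toLinearMap hh' v u
  have hh's : ∀ v, diagQF W (h'.symm v) = diagQF W' v := fun v => by
    rw [← hh' (h'.symm v), h'.apply_symm_apply]
  have hBs : ∀ v u, dBF W (h'.symm v) (h'.symm u) = dBF W' v u := fun v u =>
    dBF_of_isometry h2 h'.symm.toLinearMap hh's v u
  have hxs : h'.symm y₀ = x₀ := by rw [← hx, h'.symm_apply_apply]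
  have key : ∀ v : ι → F, (h' (Sum.elim (0 : Unit → F) v)) (Sum.inl ()) = 0 := by
    intro v
    have h1 := hB (Sum.elim (0 : Unit → F) v) x₀
    rw [hx] at h1
    have hrhs : dBF W (Sum.elim (0 : Unit → F) v) x₀ = 0 := by
      rw [hW, dBF_orthW]
      have e1 : (Sum.elim (0 : Unit → F) v : Unit ⊕ ι → F) ∘ Sum.inl = (0 : Unit → F) := rfl
      have e2 : x₀ ∘ Sum.inr = (0 : ι → F) := rfl
      rw [e1, e2, dBF_zero_right, dBF_comm]
      have : dBF (fun _ : Unit => c) (0 : Unit → F) (x₀ ∘ Sum.inl) = 0 := by simp [dBF]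
      rw [dBF_comm] at this
      rw [this, zero_add]
    rw [hrhs] at h1
    have hlhs : dBF W' (h' (Sum.elim (0 : Unit → F) v)) y₀ = c * (h' (Sum.elim (0 : Unit → F) v)) (Sum.inl ()) := by
      rw [hW', dBF_orthW]
      have e2 : y₀ ∘ Sum.inr = (0 : κ → F) := rfl
      rw [e2, dBF_zero_right, add_zero]
      simp [dBF, hy₀def]
    rw [hlhs] at h1
    exact (mul_eq_zero.mp h1).resolve_left hc
  have keys : ∀ v : κ → F, (h'.symm (Sum.elim (0 : Unit → F) v)) (Sum.inl ()) = 0 := by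
    intro v
    have h1 := hBs (Sum.elim (0 : Unit → F) v) y₀
    rw [hxs] at h1
    have hrhs : dBF W' (Sum.elim (0 : Unit → F) v) y₀ = 0 := by
      rw [hW', dBF_orthW]
      have e1 : (Sum.elim (0 : Unit → F) v : Unit ⊕ κ → F) ∘ Sum.inl = (0 : Unit → F) := rfl
      have e2 : y₀ ∘ Sum.inr = (0 : κ → F) := rfl
      rw [e1, e2, dBF_zero_right, add_zero]
      simp [dBF]
    rw [hrhs] at h1
    have hlhs : dBF W (h'.symm (Sum.elim (0 : Unit → F) v)) x₀ = c * (h'.symm (Sum.elim (0 : Unit → F) v)) (Sum.inl ()) := by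
      rw [hW, dBF_orthW]
      have e2' : x₀ ∘ Sum.inr = (0 : ι → F) := rfl
      rw [e2', dBF_zero_right, add_zero]
      simp [dBF, hx₀def]
    rw [hlhs] at h1
    exact (mul_eq_zero.mp h1).resolve_left hc
  set J : (ι → F) →ₗ[F] (Unit ⊕ ι → F) :=
    { toFun := fun v => Sum.elim (0 : Unit → F) v
      map_add' := fun v u => by funext s; cases s <;> simp
      map_smul' := fun t v => by funext s; cases s <;> simp } with hJ
  set J' : (κ → F) →ₗ[F] (Unit ⊕ κ → F) :=
    { toFun := fun v => Sum.elim (0 : Unit → F) v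
      map_add' := fun v u => by funext s; cases s <;> simp
      map_smul' := fun t v => by funext s; cases s <;> simp } with hJ'
  have elim_eq : ∀ {α : Type} (X : Unit ⊕ α → F), X (Sum.inl ()) = 0 →
      (Sum.elim (0 : Unit → F) (X ∘ Sum.inr) : Unit ⊕ α → F) = X := by
    intro α X hX
    funext s
    cases s with
    | inl u => cases u; exact hX.symm
    | inr i => rfl
  refine ⟨LinearEquiv.ofLinear
    ((LinearMap.funLeft F F Sum.inr) ∘ₗ h'.toLinearMap ∘ₗ J)
    ((LinearMap.funLeft F F Sum.inr) ∘ₗ h'.symm.toLinearMap ∘ₗ J') ?_ ?_, ?_⟩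
  · apply LinearMap.ext; intro v
    simp only [LinearMap.comp_apply, LinearMap.id_apply]
    have hJv : J' v = Sum.elim (0 : Unit → F) v := rfl
    have : J ((LinearMap.funLeft F F Sum.inr) (h'.symm.toLinearMap (J' v)))
        = h'.symm (Sum.elim (0 : Unit → F) v) := by
      have := elim_eq (h'.symm (Sum.elim (0 : Unit → F) v)) (keys v)
      exact this
    rw [hJv] at this ⊢
    show (h' (J ((LinearMap.funLeft F F Sum.inr) (h'.symm (Sum.elim (0 : Unit → F) v))))) ∘ Sum.inr = v
    rw [show J ((LinearMap.funLeft F F Sum.inr) (h'.symm (Sum.elim (0 : Unit → F) v)))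
        = h'.symm (Sum.elim (0 : Unit → F) v) from this]
    rw [h'.apply_symm_apply]
    rfl
  · apply LinearMap.ext; intro v
    simp only [LinearMap.comp_apply, LinearMap.id_apply]
    have : J' ((LinearMap.funLeft F F Sum.inr) (h'.toLinearMap (J v)))
        = h' (Sum.elim (0 : Unit → F) v) := by
      have := elim_eq (h' (Sum.elim (0 : Unit → F) v)) (key v)
      exact this
    show (h'.symm (J' ((LinearMap.funLeft F F Sum.inr) (h' (Sum.elim (0 : Unit → F) v))))) ∘ Sum.inr = v
    rw [show J' ((LinearMap.funLeft F F Sum.inr) (h' (Sum.elim (0 : Unit → F) v)))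
        = h' (Sum.elim (0 : Unit → F) v) from this]
    rw [h'.symm_apply_apply]
    rfl
  · intro v
    simp only [LinearEquiv.ofLinear_apply, LinearMap.comp_apply]
    have h1 : diagQF W' (h' (Sum.elim (0 : Unit → F) v)) = diagQF w v := by
      rw [hh']
      rw [hW, diagQF_orthW]
      have e1 : (Sum.elim (0 : Unit → F) v : Unit ⊕ ι → F) ∘ Sum.inl = (0 : Unit → F) := rfl
      have e2 : (Sum.elim (0 : Unit → F) v : Unit ⊕ ι → F) ∘ Sum.inr = v := rfl
      rw [e1, e2, diagQF_zero, zero_add]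
    have h2b : diagQF W' (h' (Sum.elim (0 : Unit → F) v))
        = c * ((h' (Sum.elim (0 : Unit → F) v)) (Sum.inl ())) ^ 2
          + diagQF w' ((h' (Sum.elim (0 : Unit → F) v)) ∘ Sum.inr) := by
      rw [hW', diagQF_orthW, diagQF_unit]
      rfl
    rw [h2b, key v] at h1
    have hfl : (LinearMap.funLeft F F Sum.inr) (h'.toLinearMap (J v))
        = (h' (Sum.elim (0 : Unit → F) v)) ∘ Sum.inr := rfl
    rw [hfl]
    simpa using h1

end Infra4

section Infra5
variable {F : Type} [Field F]

def shiftEquiv (α : Type) (n : ℕ) : (α ⊕ Fin (n + 1)) ≃ (Unit ⊕ (α ⊕ Fin n)) where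
  toFun := fun s => Sum.rec (fun i => Sum.inr (Sum.inl i))
    (fun j => Fin.cases (Sum.inl ()) (fun j' => Sum.inr (Sum.inr j')) j) s
  invFun := fun s => Sum.rec (fun _ => Sum.inr 0)
    (fun t => Sum.rec (fun i => Sum.inl i) (fun j' => Sum.inr j'.succ) t) s
  left_inv := by
    rintro (i | j)
    · rfl
    · refine Fin.cases ?_ (fun j' => ?_) j <;> simp
  right_inv := by
    rintro (⟨⟩ | (i | j')) <;> simp

lemma orth_empty {ι : Type} [Fintype ι] (w : ι → F) (u : Fin 0 → F) :
    QFEquiv F (orthW w u) w :=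
  QFEquiv.reindex (Equiv.sumEmpty ι (Fin 0)) (by rintro (i | j); exacts [rfl, j.elim0])

/-- cancellation of a list of one-dimensional forms -/
lemma cancel_fin (h2 : (2 : F) ≠ 0) :
    ∀ (n : ℕ) {ι κ : Type} [Fintype ι] [Fintype κ] (w : ι → F) (w' : κ → F)
      (u : Fin n → F), (∀ j, u j ≠ 0) →
      QFEquiv F (orthW w u) (orthW w' u) → QFEquiv F w w' := by
  intro n
  induction n with
  | zero =>
      intro ι κ _ _ w w' u hu h
      exact ((orth_empty w u).symm.trans h).trans (orth_empty w' u)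
  | succ n IH =>
      intro ι κ _ _ w w' u hu h
      have hre : ∀ (α : Type) (_ : Fintype α) (wα : α → F),
          QFEquiv F (orthW wα u)
            (orthW (fun _ : Unit => u 0) (orthW wα (u ∘ Fin.succ))) := by
        intro α _ wα
        refine QFEquiv.reindex (shiftEquiv α n) ?_
        rintro (i | j)
        · rfl
        · refine Fin.cases ?_ (fun j' => ?_) j <;> simp [shiftEquiv, orthW]
      have h' := ((hre ι _ w).symm.trans h).trans (hre κ _ w')
      have hcan := cancel_unit h2 (hu 0) h'
      exact IH w w' (u ∘ Fin.succ) (fun j => hu j.succ) hcan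

/-- cancellation over an arbitrary finite index type -/
lemma cancel_many (h2 : (2 : F) ≠ 0) {μ ι κ : Type} [Fintype μ] [Fintype ι] [Fintype κ]
    (u : μ → F) (hu : ∀ j, u j ≠ 0) {w : ι → F} {w' : κ → F}
    (h : QFEquiv F (orthW w u) (orthW w' u)) : QFEquiv F w w' := by
  set τ := Fintype.equivFin μ with hτ
  have hre : ∀ (α : Type) (_ : Fintype α) (wα : α → F),
      QFEquiv F (orthW wα u) (orthW wα (u ∘ τ.symm)) := by
    intro α _ wα
    refine QFEquiv.reindex (Equiv.sumCongr (Equiv.refl α) τ) ?_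
    rintro (i | j)
    · rfl
    · simp [orthW]
  have h' := ((hre ι _ w).symm.trans h).trans (hre κ _ w')
  exact cancel_fin h2 _ w w' (u ∘ τ.symm) (fun j => hu (τ.symm j)) h'

lemma hypW_ne_zero (m : ℕ) : ∀ j : Fin m ⊕ Fin m, hypW F m j ≠ 0 := by
  rintro (j | j) <;> simp [hypW]

/-- a Witt-split form of positive dimension is isotropic -/
lemma wittSplit_isotropic (h2 : (2 : F) ≠ 0) {ι : Type} [Fintype ι] (T : ι → F)
    (hpos : 0 < Fintype.card ι) {m M : ℕ}
    (h : QFEquiv F (orthW T (hypW F m)) (hypW F M)) :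
    ∃ v, v ≠ 0 ∧ diagQF T v = 0 := by
  have hcard := h.card_eq
  simp only [Fintype.card_sum, Fintype.card_fin] at hcard
  obtain ⟨s, hs1, hs2⟩ : ∃ s : ℕ, 0 < s ∧ s + m = M := by
    refine ⟨M - m, ?_, ?_⟩ <;> omega
  subst hs2
  have hmerge : QFEquiv F (orthW (hypW F s) (hypW F m)) (hypW F (s + m)) :=
    QFEquiv.hyp_merge s m
  have h' : QFEquiv F (orthW T (hypW F m)) (orthW (hypW F s) (hypW F m)) :=
    h.trans hmerge.symm
  have hT : QFEquiv F T (hypW F s) := cancel_many h2 (hypW F m) (hypW_ne_zero m) h'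
  have hiso : ∃ v, v ≠ 0 ∧ diagQF (hypW F s) v = 0 := by
    refine ⟨fun _ => 1, ?_, ?_⟩
    · intro h0
      have := congrFun h0 (Sum.inl ⟨0, hs1⟩)
      simpa using this
    · simp [diagQF, hypW, Fintype.sum_sum_type]
  exact hT.symm.isotropic hiso

/-- an isotropic nondegenerate diagonal form is universal -/
lemma isotropic_universal (h2 : (2 : F) ≠ 0) {ι : Type} [Fintype ι] {w : ι → F}
    (hw : ∀ i, w i ≠ 0) (hiso : ∃ v, v ≠ 0 ∧ diagQF w v = 0) (e : F) :
    RepresentsQF w e := by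
  classical
  obtain ⟨v, hv0, hv⟩ := hiso
  obtain ⟨i₀, hi₀⟩ := Function.ne_iff.mp hv0
  have hvi₀ : v i₀ ≠ 0 := by simpa using hi₀
  set s := (e - w i₀) / (2 * w i₀ * v i₀) with hs
  have hwi₀ := hw i₀
  have hkey : 2 * s * (w i₀ * v i₀) = e - w i₀ := by
    rw [hs]
    field_simp
  refine ⟨s • v + Pi.single i₀ 1, ?_⟩
  rw [show s • v + Pi.single i₀ 1 = Pi.single i₀ 1 + s • v from by abel, diagQF_add_smul,
    diagQF_single, hv, dBF_comm, dBF_single_right]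
  linear_combination hkey

end Infra5

section Infra6
variable {F : Type} [Field F]

lemma sum_split_two {ι : Type} [Fintype ι] [DecidableEq ι] (f : ι → F) {i₀ i₁ : ι}
    (hne : i₀ ≠ i₁) :
    ∑ i, f i = f i₀ + f i₁ + ∑ i ∈ (Finset.univ.erase i₀).erase i₁, f i := by
  rw [← Finset.add_sum_erase Finset.univ f (Finset.mem_univ i₀)]
  rw [← Finset.add_sum_erase (Finset.univ.erase i₀) f
    (Finset.mem_erase.mpr ⟨hne.symm, Finset.mem_univ i₁⟩)]
  ring

lemma repAux [DecidableEq F] (h2 : (2 : F) ≠ 0) {ι : Type} [Fintype ι] [DecidableEq ι] :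
    ∀ (n : ℕ) (ψ v : ι → F) (c : F), (∀ i, ψ i ≠ 0) → c ≠ 0 →
      diagQF ψ v = c → (Finset.univ.filter (fun i => v i ≠ 0)).card ≤ n →
      ∃ (ψ' : ι → F) (i₀ : ι), QFEquiv F ψ ψ' ∧ ψ' i₀ = c ∧ ∀ i, ψ' i ≠ 0 := by
  intro n
  induction n with
  | zero =>
      intro ψ v c hψ hc hv hn
      exfalso
      apply hc
      rw [← hv, diagQF]
      refine Finset.sum_eq_zero fun i _ => ?_
      have hvi : v i = 0 := by
        by_contra hvi
        have hmem : i ∈ Finset.univ.filter (fun i => v i ≠ 0) := by simp [hvi]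
        have := Finset.card_pos.mpr ⟨i, hmem⟩
        omega
      rw [hvi]; ring
  | succ n IH =>
      intro ψ v c hψ hc hv hn
      by_cases hle : (Finset.univ.filter (fun i => v i ≠ 0)).card ≤ n
      · exact IH ψ v c hψ hc hv hle
      · have hcard : (Finset.univ.filter (fun i => v i ≠ 0)).card = n + 1 := by omega
        rcases Nat.eq_zero_or_pos n with hn0 | hn1
        · -- exactly one nonzero coordinate
          subst hn0
          obtain ⟨i₀, hi₀⟩ := Finset.card_eq_one.mp hcard
          have hvi₀ : v i₀ ≠ 0 := by
            have : i₀ ∈ Finset.univ.filter (fun i => v i ≠ 0) := by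
              rw [hi₀]; exact Finset.mem_singleton_self i₀
            simpa using this
          have hvz : ∀ i, i ≠ i₀ → v i = 0 := by
            intro i hii
            by_contra hvi
            have hmem : i ∈ Finset.univ.filter (fun i => v i ≠ 0) := by simp [hvi]
            rw [hi₀] at hmem
            exact hii (Finset.mem_singleton.mp hmem)
          have hval : ψ i₀ * v i₀ ^ 2 = c := by
            rw [← hv, diagQF, Finset.sum_eq_single i₀]
            · intro l _ hl; rw [hvz l hl]; ring
            · intro hl; exact absurd (Finset.mem_univ i₀) hl
          set u : ι → F := Function.update (fun _ => (1 : F)) i₀ (v i₀) with hu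
          have hu0 : ∀ i, u i ≠ 0 := by
            intro i
            by_cases hii : i = i₀
            · subst hii; rw [hu, Function.update_self]; exact hvi₀
            · rw [hu, Function.update_of_ne hii]; exact one_ne_zero
          have hsc := QFEquiv.scale (w := ψ) u hu0
          have hEq : (fun i => ψ i * u i ^ 2) = Function.update ψ i₀ c := by
            funext i
            by_cases hii : i = i₀
            · subst hii
              rw [hu, Function.update_self, Function.update_self, hval]
            · rw [hu, Function.update_of_ne hii, Function.update_of_ne hii]
              ring
          rw [hEq] at hsc
          refine ⟨Function.update ψ i₀ c, i₀, hsc, Function.update_self _ _ _, ?_⟩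
          intro i
          by_cases hii : i = i₀
          · subst hii; rw [Function.update_self]; exact hc
          · rw [Function.update_of_ne hii]; exact hψ i
        · -- at least two nonzero coordinates
          have h2card : 1 < (Finset.univ.filter (fun i => v i ≠ 0)).card := by omega
          obtain ⟨i₀, hi₀m, i₁, hi₁m, hne⟩ := Finset.one_lt_card.mp h2card
          have hvi₀ : v i₀ ≠ 0 := by simpa using hi₀m
          have hvi₁ : v i₁ ≠ 0 := by simpa using hi₁m
          set b : F := ψ i₀ * v i₀ ^ 2 + ψ i₁ * v i₁ ^ 2 with hb
          have hc2 : ψ i₀ * v i₀ ^ 2 + ψ i₁ * v i₁ ^ 2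
              + ∑ i ∈ (Finset.univ.erase i₀).erase i₁, ψ i * v i ^ 2 = c := by
            rw [← hv, diagQF]
            exact (sum_split_two (fun i => ψ i * v i ^ 2) hne).symm
          by_cases hb0 : b = 0
          · -- zero out the two coordinates
            set v' : ι → F := Function.update (Function.update v i₀ 0) i₁ 0 with hv'
            have hv'i₀ : v' i₀ = 0 := by
              rw [hv', Function.update_of_ne hne, Function.update_self]
            have hv'i₁ : v' i₁ = 0 := by rw [hv', Function.update_self]
            have hv'off : ∀ i, i ≠ i₀ → i ≠ i₁ → v' i = v i := by
              intro i h0 h1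
              rw [hv', Function.update_of_ne h1, Function.update_of_ne h0]
            have hQv' : diagQF ψ v' = c := by
              rw [diagQF, sum_split_two (fun i => ψ i * v' i ^ 2) hne, hv'i₀, hv'i₁]
              have htl : ∑ i ∈ (Finset.univ.erase i₀).erase i₁, ψ i * v' i ^ 2
                  = ∑ i ∈ (Finset.univ.erase i₀).erase i₁, ψ i * v i ^ 2 := by
                refine Finset.sum_congr rfl fun i hi => ?_
                have hi1 := (Finset.mem_erase.mp hi).1
                have hi0 := (Finset.mem_erase.mp ((Finset.mem_erase.mp hi).2)).1
                rw [hv'off i hi0 hi1]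
              rw [htl]
              linear_combination hc2 + hb - hb0
            have hsub : Finset.univ.filter (fun i => v' i ≠ 0)
                ⊆ ((Finset.univ.filter (fun i => v i ≠ 0)).erase i₀).erase i₁ := by
              intro i hi
              have hvi' : v' i ≠ 0 := by simpa using hi
              have h1 : i ≠ i₁ := fun hh => hvi' (hh ▸ hv'i₁)
              have h0 : i ≠ i₀ := fun hh => hvi' (hh ▸ hv'i₀)
              refine Finset.mem_erase.mpr ⟨h1, Finset.mem_erase.mpr ⟨h0, ?_⟩⟩
              have heq := hv'off i h0 h1
              rw [heq] at hvi'
              simp [hvi']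
            have hcount : (Finset.univ.filter (fun i => v' i ≠ 0)).card ≤ n := by
              have hle2 := Finset.card_le_card hsub
              rw [Finset.card_erase_of_mem (Finset.mem_erase.mpr ⟨hne.symm, hi₁m⟩),
                Finset.card_erase_of_mem hi₀m, hcard] at hle2
              omega
            exact IH ψ v' c hψ hc hQv' hcount
          · -- merge the two coordinates into the first slot
            have hbin := binaryRep (F := F) (p := ψ i₀) (q := ψ i₁) (a0 := v i₀) (b0 := v i₁)
              (by rw [← hb]; exact hb0)
            set ψ' : ι → F := Function.update (Function.update ψ i₀ b) i₁ (ψ i₀ * ψ i₁ * b)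
              with hψ'
            have hψ'i₀ : ψ' i₀ = b := by
              rw [hψ', Function.update_of_ne hne, Function.update_self]
            have hψ'i₁ : ψ' i₁ = ψ i₀ * ψ i₁ * b := by rw [hψ', Function.update_self]
            have hψ'off : ∀ i, i ≠ i₀ → i ≠ i₁ → ψ' i = ψ i := by
              intro i h0 h1
              rw [hψ', Function.update_of_ne h1, Function.update_of_ne h0]
            have hts : QFEquiv F ψ ψ' := by
              refine QFEquiv.twoSlot i₀ i₁ hne hψ'off ?_
              rw [hψ'i₀, hψ'i₁, hb]
              exact hbin
            set v' : ι → F := Function.update (Function.update v i₀ 1) i₁ 0 with hv'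
            have hv'i₀ : v' i₀ = 1 := by
              rw [hv', Function.update_of_ne hne, Function.update_self]
            have hv'i₁ : v' i₁ = 0 := by rw [hv', Function.update_self]
            have hv'off : ∀ i, i ≠ i₀ → i ≠ i₁ → v' i = v i := by
              intro i h0 h1
              rw [hv', Function.update_of_ne h1, Function.update_of_ne h0]
            have hQv' : diagQF ψ' v' = c := by
              rw [diagQF, sum_split_two (fun i => ψ' i * v' i ^ 2) hne, hv'i₀, hv'i₁,
                hψ'i₀, hψ'i₁]
              have htl : ∑ i ∈ (Finset.univ.erase i₀).erase i₁, ψ' i * v' i ^ 2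
                  = ∑ i ∈ (Finset.univ.erase i₀).erase i₁, ψ i * v i ^ 2 := by
                refine Finset.sum_congr rfl fun i hi => ?_
                have hi1 := (Finset.mem_erase.mp hi).1
                have hi0 := (Finset.mem_erase.mp ((Finset.mem_erase.mp hi).2)).1
                rw [hv'off i hi0 hi1, hψ'off i hi0 hi1]
              rw [htl]
              linear_combination hc2 + hb
            have hψ'nz : ∀ i, ψ' i ≠ 0 := by
              intro i
              by_cases h1 : i = i₁
              · rw [h1, hψ'i₁]
                exact mul_ne_zero (mul_ne_zero (hψ i₀) (hψ i₁)) hb0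
              · by_cases h0 : i = i₀
                · rw [h0, hψ'i₀]; exact hb0
                · rw [hψ'off i h0 h1]; exact hψ i
            have hsub : Finset.univ.filter (fun i => v' i ≠ 0)
                ⊆ (Finset.univ.filter (fun i => v i ≠ 0)).erase i₁ := by
              intro i hi
              have hvi' : v' i ≠ 0 := by simpa using hi
              have h1 : i ≠ i₁ := fun hh => hvi' (hh ▸ hv'i₁)
              refine Finset.mem_erase.mpr ⟨h1, ?_⟩
              by_cases h0 : i = i₀
              · rw [h0]; exact hi₀m
              · have heq := hv'off i h0 h1
                rw [heq] at hvi'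
                simp [hvi']
            have hcount : (Finset.univ.filter (fun i => v' i ≠ 0)).card ≤ n := by
              have hle2 := Finset.card_le_card hsub
              rw [Finset.card_erase_of_mem hi₁m, hcard] at hle2
              omega
            obtain ⟨ψ'', i₀'', hQ2, hval2, hnz2⟩ := IH ψ' v' c hψ'nz hc hQv' hcount
            exact ⟨ψ'', i₀'', hts.trans hQ2, hval2, hnz2⟩

/-- representation lemma: a represented nonzero value can be moved to a slot -/
lemma representation_split (h2 : (2 : F) ≠ 0) {ι : Type} [Fintype ι] {ψ : ι → F}
    (hψ : ∀ i, ψ i ≠ 0) {c : F} (hc : c ≠ 0) (hrep : RepresentsQF ψ c) :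
    ∃ (ψ' : ι → F) (i₀ : ι), QFEquiv F ψ ψ' ∧ ψ' i₀ = c ∧ ∀ i, ψ' i ≠ 0 := by
  classical
  obtain ⟨v, hv⟩ := hrep
  exact repAux h2 _ ψ v c hψ hc hv le_rfl

end Infra6

section Infra7
variable {F : Type} [Field F]
variable {ι κ ι' : Type} [Fintype ι] [Fintype κ] [Fintype ι']

lemma QFEquiv.smul_congr (c : F) {w : ι → F} {w' : κ → F} (h : QFEquiv F w w') :
    QFEquiv F (smulW c w) (smulW c w') := by
  obtain ⟨e, he⟩ := h
  exact ⟨e, fun v => by rw [diagQF_smulW, diagQF_smulW, he]⟩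

lemma tensor_orth_distrib (τ : κ → F) (w₁ : ι → F) (w₂ : ι' → F) :
    QFEquiv F (tensorW τ (orthW w₁ w₂)) (orthW (tensorW τ w₁) (tensorW τ w₂)) := by
  refine QFEquiv.reindex (Equiv.prodSumDistrib κ ι ι') ?_
  rintro ⟨j, i | i⟩ <;> rfl

lemma tensor_smul (τ : κ → F) (c : F) (w : ι → F) :
    tensorW τ (smulW c w) = smulW c (tensorW τ w) := by
  funext p
  simp [tensorW, smulW]
  ring

lemma tensor_unit (a c : F) :
    QFEquiv F (tensorW (pf1 a) (fun _ : Unit => c)) (smulW c (pf1 a)) := by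
  refine QFEquiv.reindex (Equiv.prodPUnit (Fin 2)) ?_
  rintro ⟨s, ⟨⟩⟩
  simp [tensorW, smulW, mul_comm]

lemma pf1_ne_zero {a : F} (ha : a ≠ 0) : ∀ s : Fin 2, pf1 a s ≠ 0 := by
  intro s
  fin_cases s <;> simp [pf1]
  exact ha

/-- the two-dimensional front block `⟨c⟩⊗⟨⟨a⟩⟩ ⊥ ⟨d⟩⊗⟨⟨a⟩⟩` is hyperbolic
when `d = c(a - t²)` -/
lemma front_block_hyp (h2 : (2 : F) ≠ 0) {a c t : F} (ha : a ≠ 0) (hc : c ≠ 0)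
    (hn1 : t ^ 2 - a ≠ 0) :
    QFEquiv F (orthW (smulW c (pf1 a)) (smulW (c * (a - t ^ 2)) (pf1 a))) (hypW F 2) := by
  have hmid : QFEquiv F (smulW (c * (a - t ^ 2)) (pf1 a)) (smulW (-1) (smulW c (pf1 a))) := by
    have he1 : smulW (c * (a - t ^ 2)) (pf1 a)
        = smulW (-c) (smulW (t ^ 2 - a) (pf1 a)) := by
      funext s; simp only [smulW]; ring
    have he2 : smulW (-1 : F) (smulW c (pf1 a)) = smulW (-c) (pf1 a) := by
      funext s; simp only [smulW]; ring
    rw [he1, he2]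
    exact QFEquiv.smul_congr (-c) (norm_mul_pf1 (x := t) (y := 1) hn1 (by ring))
  have h1 : QFEquiv F (orthW (smulW c (pf1 a)) (smulW (c * (a - t ^ 2)) (pf1 a)))
      (orthW (smulW c (pf1 a)) (smulW (-1) (smulW c (pf1 a)))) :=
    QFEquiv.orth (QFEquiv.refl _) hmid
  have h3 : ∀ s : Fin 2, smulW c (pf1 a) s ≠ 0 := fun s =>
    mul_ne_zero hc (pf1_ne_zero ha s)
  have h4 := split_pm h2 h3
  have h5 : QFEquiv F (orthW (fun _ : Fin 2 => (1 : F)) (fun _ : Fin 2 => (-1 : F)))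
      (hypW F 2) := by
    have := QFEquiv.const_pm_hyp (F := F) (ι := Fin 2)
    have hc2 : Fintype.card (Fin 2) = 2 := by simp
    rw [hc2] at this
    exact this
  exact h1.trans (h4.trans h5)

/-- MAIN LEMMA: if `⟨⟨a⟩⟩ ⊗ ψ` is Witt-split (`a` not a square) then the
discriminant of `ψ` is a norm -/
lemma mainLemma (h2 : (2 : F) ≠ 0) {a : F} (ha : a ≠ 0) (hna : ∀ s : F, s ^ 2 ≠ a) :
    ∀ (K : ℕ) (ι : Type) (_ : Fintype ι) (ψ : ι → F), Fintype.card ι = 2 * K →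
      (∀ i, ψ i ≠ 0) →
      (∃ m M, QFEquiv F (orthW (tensorW (pf1 a) ψ) (hypW F m)) (hypW F M)) →
      ∃ x y u : F, u ≠ 0 ∧ x ^ 2 - a * y ^ 2 ≠ 0 ∧
        ∏ i, ψ i = (-1) ^ K * (x ^ 2 - a * y ^ 2) * u ^ 2 := by
  intro K
  induction K with
  | zero =>
      intro ι _ ψ hcard hψ _
      have hie : IsEmpty ι := Fintype.card_eq_zero_iff.mp (by omega)
      refine ⟨1, 0, 1, one_ne_zero, by norm_num, ?_⟩
      rw [Finset.univ_eq_empty, Finset.prod_empty]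
      norm_num
  | succ K IH =>
      intro ι instι ψ hcard hψ hsplit
      classical
      obtain ⟨m, M, hsp⟩ := hsplit
      have hposT : 0 < Fintype.card (Fin 2 × ι) := by
        simp only [Fintype.card_prod, Fintype.card_fin, hcard]
        omega
      obtain ⟨V, hV0, hVz⟩ := wittSplit_isotropic h2 _ hposT hsp
      set v0 : ι → F := fun i => V (0, i) with hv0def
      set v1 : ι → F := fun i => V (1, i) with hv1def
      have hkey : diagQF ψ v0 = a * diagQF ψ v1 := by
        have h0 := hVz
        rw [diagQF, Fintype.sum_prod_type, Fin.sum_univ_two] at h0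
        have l0 : ∑ i, tensorW (pf1 a) ψ (0, i) * V (0, i) ^ 2 = ∑ i, ψ i * v0 i ^ 2 :=
          Finset.sum_congr rfl fun i _ => by simp [tensorW, pf1, hv0def]
        have l1 : ∑ i, tensorW (pf1 a) ψ (1, i) * V (1, i) ^ 2
            = ∑ i, -(a * (ψ i * v1 i ^ 2)) :=
          Finset.sum_congr rfl fun i _ => by simp [tensorW, pf1, hv1def]; ring
        rw [l0, l1] at h0
        rw [Finset.sum_neg_distrib, ← Finset.mul_sum] at h0
        rw [diagQF, diagQF, ← sub_eq_zero]
        rw [Finset.mul_sum]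
        rw [← Finset.mul_sum] 
        linear_combination h0
      have hcrep : ∃ c, c ≠ 0 ∧ RepresentsQF ψ c ∧ RepresentsQF ψ (a * c) := by
        by_cases hQ1 : diagQF ψ v1 = 0
        · have hQ0 : diagQF ψ v0 = 0 := by rw [hkey, hQ1, mul_zero]
          have hiso : ∃ vv, vv ≠ 0 ∧ diagQF ψ vv = 0 := by
            by_cases hv1 : v1 = 0
            · refine ⟨v0, ?_, hQ0⟩
              intro h0
              apply hV0
              funext p
              obtain ⟨s, i⟩ := p
              fin_cases s
              · simpa [hv0def] using congrFun h0 i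
              · simpa [hv1def] using congrFun hv1 i
            · exact ⟨v1, hv1, hQ1⟩
          exact ⟨1, one_ne_zero, isotropic_universal h2 hψ hiso 1,
            isotropic_universal h2 hψ hiso (a * 1)⟩
        · exact ⟨diagQF ψ v1, hQ1, ⟨v1, rfl⟩, ⟨v0, hkey⟩⟩
      obtain ⟨c, hc, hrc, hrac⟩ := hcrep
      obtain ⟨ψ1, i₀, hQψ1, hψ1i₀, hψ1nz⟩ := representation_split h2 hψ hc hrc
      have hrac1 : RepresentsQF ψ1 (a * c) := hQψ1.represents hrac
      set ρ : {i : ι // i ≠ i₀} → F := fun j => ψ1 j.1 with hρdef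
      set σ1 : Unit ⊕ {i : ι // i ≠ i₀} ≃ ι :=
        { toFun := Sum.elim (fun _ => i₀) (fun j => j.1)
          invFun := fun i => if h : i = i₀ then Sum.inl () else Sum.inr ⟨i, h⟩
          left_inv := by
            rintro (⟨⟩ | j)
            · simp
            · simp [j.2]
          right_inv := by
            intro i
            by_cases h : i = i₀
            · simp [h]
            · simp [h] } with hσ1
      have hA : QFEquiv F (orthW (fun _ : Unit => c) ρ) ψ1 := by
        refine QFEquiv.reindex σ1 ?_
        rintro (⟨⟩ | j)
        · exact hψ1i₀.symm
        · rfl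
      have hrac2 : RepresentsQF (orthW (fun _ : Unit => c) ρ) (a * c) :=
        hA.symm.represents hrac1
      obtain ⟨uu, huu⟩ := hrac2
      set t := uu (Sum.inl ()) with htdef
      set uρ : {i : ι // i ≠ i₀} → F := fun j => uu (Sum.inr j) with huρdef
      have hQuu : c * t ^ 2 + diagQF ρ uρ = a * c := by
        rw [← huu, diagQF_orthW, diagQF_unit]
        rfl
      have hn1 : t ^ 2 - a ≠ 0 := by
        intro h0
        exact hna t (by linear_combination h0)
      set d := c * (a - t ^ 2) with hddef
      have hdnz : d ≠ 0 := by
        rw [hddef]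
        refine mul_ne_zero hc fun h0 => hn1 (by linear_combination -h0)
      have hdrep : diagQF ρ uρ = d := by rw [hddef]; linear_combination hQuu
      obtain ⟨ρ1, i₁, hQρ1, hρ1i₁, hρ1nz⟩ :=
        representation_split h2 (fun j => hψ1nz j.1) hdnz ⟨uρ, hdrep⟩
      set ρ' : {j : {i : ι // i ≠ i₀} // j ≠ i₁} → F := fun x => ρ1 x.1 with hρ'def
      set σ2 : Unit ⊕ {j : {i : ι // i ≠ i₀} // j ≠ i₁} ≃ {i : ι // i ≠ i₀} :=
        { toFun := Sum.elim (fun _ => i₁) (fun j => j.1)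
          invFun := fun i => if h : i = i₁ then Sum.inl () else Sum.inr ⟨i, h⟩
          left_inv := by
            rintro (⟨⟩ | j)
            · simp
            · simp [j.2]
          right_inv := by
            intro i
            by_cases h : i = i₁
            · simp [h]
            · simp [h] } with hσ2
      have hB : QFEquiv F (orthW (fun _ : Unit => d) ρ') ρ1 := by
        refine QFEquiv.reindex σ2 ?_
        rintro (⟨⟩ | j)
        · exact hρ1i₁.symm
        · rfl
      have hψdec : QFEquiv F ψ
          (orthW (fun _ : Unit => c) (orthW (fun _ : Unit => d) ρ')) :=
        hQψ1.trans (hA.symm.trans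
          (QFEquiv.orth (QFEquiv.refl _) (hQρ1.trans hB.symm)))
      -- tensor decomposition
      have hTdec : QFEquiv F (tensorW (pf1 a) ψ)
          (orthW (hypW F 2) (tensorW (pf1 a) ρ')) := by
        have s1 := QFEquiv.tensorRight (pf1 a) hψdec
        have s2 := tensor_orth_distrib (pf1 a) (fun _ : Unit => c)
          (orthW (fun _ : Unit => d) ρ')
        have s3 := tensor_orth_distrib (pf1 a) (fun _ : Unit => d) ρ'
        have s4 : QFEquiv F (tensorW (pf1 a) ψ)
            (orthW (tensorW (pf1 a) (fun _ : Unit => c))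
              (orthW (tensorW (pf1 a) (fun _ : Unit => d)) (tensorW (pf1 a) ρ'))) :=
          (s1.trans s2).trans (QFEquiv.orth (QFEquiv.refl _) s3)
        have s5 : QFEquiv F
            (orthW (tensorW (pf1 a) (fun _ : Unit => c))
              (orthW (tensorW (pf1 a) (fun _ : Unit => d)) (tensorW (pf1 a) ρ')))
            (orthW (orthW (tensorW (pf1 a) (fun _ : Unit => c))
              (tensorW (pf1 a) (fun _ : Unit => d))) (tensorW (pf1 a) ρ')) :=
          (QFEquiv.orth_assoc _ _ _).symm
        have s6 : QFEquiv F (orthW (tensorW (pf1 a) (fun _ : Unit => c))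
              (tensorW (pf1 a) (fun _ : Unit => d)))
            (orthW (smulW c (pf1 a)) (smulW d (pf1 a))) :=
          QFEquiv.orth (tensor_unit a c) (tensor_unit a d)
        have s7 : QFEquiv F (orthW (smulW c (pf1 a)) (smulW d (pf1 a))) (hypW F 2) := by
          rw [hddef]
          exact front_block_hyp h2 ha hc hn1
        exact (s4.trans s5).trans (QFEquiv.orth (s6.trans s7) (QFEquiv.refl _))
      -- new Witt split
      have hsplit' : ∃ m' M',
          QFEquiv F (orthW (tensorW (pf1 a) ρ') (hypW F m')) (hypW F M') := by
        refine ⟨2 + m, M, ?_⟩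
        have u1 : QFEquiv F (orthW (tensorW (pf1 a) ρ') (hypW F (2 + m)))
            (orthW (tensorW (pf1 a) ρ') (orthW (hypW F 2) (hypW F m))) :=
          QFEquiv.orth (QFEquiv.refl _) (QFEquiv.hyp_merge 2 m).symm
        have u2 := (QFEquiv.orth_assoc (tensorW (pf1 a) ρ') (hypW F 2) (hypW F m)).symm
        have u3 : QFEquiv F (orthW (orthW (tensorW (pf1 a) ρ') (hypW F 2)) (hypW F m))
            (orthW (orthW (hypW F 2) (tensorW (pf1 a) ρ')) (hypW F m)) :=
          QFEquiv.orth (QFEquiv.orth_comm _ _) (QFEquiv.refl _)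
        have u4 : QFEquiv F (orthW (orthW (hypW F 2) (tensorW (pf1 a) ρ')) (hypW F m))
            (orthW (tensorW (pf1 a) ψ) (hypW F m)) :=
          QFEquiv.orth hTdec.symm (QFEquiv.refl _)
        exact (((u1.trans u2).trans u3).trans u4).trans hsp
      -- cardinalities
      have hcι₁ : Fintype.card {i : ι // i ≠ i₀} = 2 * K + 1 := by
        have h := Fintype.card_subtype_compl (fun i : ι => i = i₀)
        rw [Fintype.card_subtype_eq] at h
        have h2' : Fintype.card {i : ι // i ≠ i₀}
            = Fintype.card {x : ι // ¬ x = i₀} :=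
          Fintype.card_congr (Equiv.subtypeEquivRight (fun _ => Iff.rfl))
        rw [h2', h, hcard]
        omega
      have hcι₂ : Fintype.card {j : {i : ι // i ≠ i₀} // j ≠ i₁} = 2 * K := by
        have h := Fintype.card_subtype_compl (fun j : {i : ι // i ≠ i₀} => j = i₁)
        rw [Fintype.card_subtype_eq] at h
        have h2' : Fintype.card {j : {i : ι // i ≠ i₀} // j ≠ i₁}
            = Fintype.card {j : {i : ι // i ≠ i₀} // ¬ j = i₁} :=
          Fintype.card_congr (Equiv.subtypeEquivRight (fun _ => Iff.rfl))
        rw [h2', h, hcι₁]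
        omega
      obtain ⟨x', y', u', hu', hn', hprod'⟩ :=
        IH _ _ ρ' hcι₂ (fun x => hρ1nz x.1) hsplit'
      obtain ⟨u0, hu0, hprodψ⟩ := hψdec.prod_eq h2
      have hprod2 : ∏ s : Unit ⊕ (Unit ⊕ {j : {i : ι // i ≠ i₀} // j ≠ i₁}),
          orthW (fun _ : Unit => c) (orthW (fun _ : Unit => d) ρ') s
          = c * (d * ∏ x, ρ' x) := by
        rw [Fintype.prod_sum_type, Fintype.prod_sum_type]
        simp [orthW]
      refine ⟨t * x' + a * y', t * y' + x', u0 * c * u', 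
        mul_ne_zero (mul_ne_zero hu0 hc) hu', ?_, ?_⟩
      · have hXY : (t * x' + a * y') ^ 2 - a * (t * y' + x') ^ 2
            = (t ^ 2 - a) * (x' ^ 2 - a * y' ^ 2) := by ring
        rw [hXY]
        exact mul_ne_zero hn1 hn'
      · have hXY : (t * x' + a * y') ^ 2 - a * (t * y' + x') ^ 2
            = (t ^ 2 - a) * (x' ^ 2 - a * y' ^ 2) := by ring
        rw [hprodψ, hprod2, hprod', hddef, hXY, pow_succ]
        ring

end Infra7

section Final
variable {F : Type} [Field F]
variable {ι κ : Type} [Fintype ι] [Fintype κ]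

lemma tensor_comm (w₁ : ι → F) (w₂ : κ → F) :
    QFEquiv F (tensorW w₁ w₂) (tensorW w₂ w₁) := by
  refine QFEquiv.reindex (Equiv.prodComm ι κ) ?_
  rintro ⟨i, j⟩
  exact mul_comm _ _

lemma orth_empty_hyp (w : ι → F) : QFEquiv F (orthW w (hypW F 0)) w := by
  refine QFEquiv.reindex (Equiv.sumEmpty ι (Fin 0 ⊕ Fin 0)) ?_
  rintro (i | (j | j))
  · rfl
  · exact j.elim0
  · exact j.elim0

/-- Final assembly once we know `lam` is a norm. -/
lemma finale {L : Type} [Field L] (h2 : (2 : L) ≠ 0) {a lam : L} (ha : a ≠ 0)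
    (hlam : lam ≠ 0) {x y : L} (hxy : lam = x ^ 2 - a * y ^ 2)
    {r : ℕ} (φL φL' : Fin r → L)
    (hiso : QFEquiv L (tensorW (pf1 a) φL') (smulW lam (tensorW (pf1 a) φL))) :
    RepresentsQF (pf1 a) lam ∧ QFEquiv L (smulW lam (pf1 a)) (pf1 a) ∧
      QFEquiv L (tensorW (pf1 a) φL') (tensorW (pf1 a) φL) := by
  have hnorm : QFEquiv L (smulW lam (pf1 a)) (pf1 a) := norm_mul_pf1 hlam hxy
  refine ⟨⟨![x, y], ?_⟩, hnorm, ?_⟩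
  · rw [show pf1 a = ![1, -a] from rfl, diagQF_pair]
    simp only [Matrix.cons_val_zero, Matrix.cons_val_one, Matrix.head_cons]
    linear_combination -hxy
  · have h1 : smulW lam (tensorW (pf1 a) φL) = tensorW (smulW lam (pf1 a)) φL := by
      funext p; simp only [smulW, tensorW]; ring
    have h3 : QFEquiv L (tensorW (smulW lam (pf1 a)) φL) (tensorW (pf1 a) φL) :=
      ((tensor_comm _ _).trans (QFEquiv.tensorRight φL hnorm)).trans (tensor_comm _ _)
    rw [h1] at hiso
    exact hiso.trans h3

end Final


/-- for odd-dimensional forms `φ, φ'` of trivial (signed) discriminant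
over `k` and `a, λ ∈ Lˣ` for an extension `L/k`, if `⟨⟨a⟩⟩⊗φ'_L ≅ ⟨λ⟩·⟨⟨a⟩⟩⊗φ_L` then
the quaternion class `(λ,a)` is trivial in `Br(L)` — equivalently `λ` is represented
by `⟨1,−a⟩` over `L` — hence `⟨λ⟩·⟨⟨a⟩⟩ ≅ ⟨⟨a⟩⟩` and `⟨⟨a⟩⟩⊗φ'_L ≅ ⟨⟨a⟩⟩⊗φ_L`. -/
theorem stmt_12 {k L : Type} [Field k] [Field L] [Algebra k L]
    (hchar : (2 : k) ≠ 0)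
    {r : ℕ} (hr : Odd r) (φ φ' : Fin r → k)
    (hφ : ∀ i, φ i ≠ 0) (hφ' : ∀ i, φ' i ≠ 0)
    (hdisc : ∃ x : k, x ≠ 0 ∧ (-1 : k) ^ (r * (r - 1) / 2) * ∏ i, φ i = x ^ 2)
    (hdisc' : ∃ x : k, x ≠ 0 ∧ (-1 : k) ^ (r * (r - 1) / 2) * ∏ i, φ' i = x ^ 2)
    (a lam : L) (ha : a ≠ 0) (hlam : lam ≠ 0)
    (hiso : QFEquiv L (tensorW (pf1 a) (fun i => algebraMap k L (φ' i)))
      (smulW lam (tensorW (pf1 a) (fun i => algebraMap k L (φ i))))) :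
    RepresentsQF (pf1 a) lam ∧
    QFEquiv L (smulW lam (pf1 a)) (pf1 a) ∧
    QFEquiv L (tensorW (pf1 a) (fun i => algebraMap k L (φ' i)))
      (tensorW (pf1 a) (fun i => algebraMap k L (φ i))) := by
  classical
  have hinj : Function.Injective (algebraMap k L) := (algebraMap k L).injective
  have h2L : (2 : L) ≠ 0 := by
    intro h0
    apply hchar
    apply hinj
    rw [map_ofNat, map_zero, h0]
  set φL : Fin r → L := fun i => algebraMap k L (φ i) with hφLdef
  set φL' : Fin r → L := fun i => algebraMap k L (φ' i) with hφL'def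
  have hφLnz : ∀ i, φL i ≠ 0 := fun i h0 => hφ i (hinj (by rw [map_zero]; exact h0))
  have hφL'nz : ∀ i, φL' i ≠ 0 := fun i h0 => hφ' i (hinj (by rw [map_zero]; exact h0))
  by_cases hsq : ∃ s : L, s ^ 2 = a
  · -- a is a square: the Pfister form is universal for trivial reasons
    obtain ⟨s, hs⟩ := hsq
    have hs0 : s ≠ 0 := by
      intro h0; apply ha; rw [← hs, h0]; ring
    have hxy : lam = ((lam + 1) / 2) ^ 2 - a * ((lam - 1) / (2 * s)) ^ 2 := by
      rw [← hs]
      field_simp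
      ring
    exact finale h2L ha hlam hxy φL φL' hiso
  · -- a is not a square: the core case
    push_neg at hsq
    set ψ : Fin r ⊕ Fin r → L := orthW φL' (smulW (-lam) φL) with hψdef
    have hψnz : ∀ i, ψ i ≠ 0 := by
      rintro (i | i)
      · exact hφL'nz i
      · exact mul_ne_zero (neg_ne_zero.mpr hlam) (hφLnz i)
    -- ⟨⟨a⟩⟩ ⊗ ψ is split
    have hsplit : ∃ m M,
        QFEquiv L (orthW (tensorW (pf1 a) ψ) (hypW L m)) (hypW L M) := by
      have c1 : QFEquiv L (tensorW (pf1 a) ψ)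
          (orthW (tensorW (pf1 a) φL') (tensorW (pf1 a) (smulW (-lam) φL))) :=
        tensor_orth_distrib (pf1 a) φL' (smulW (-lam) φL)
      have c2 : tensorW (pf1 a) (smulW (-lam) φL)
          = smulW (-lam) (tensorW (pf1 a) φL) := tensor_smul _ _ _
      have c3 : QFEquiv L
          (orthW (tensorW (pf1 a) φL') (smulW (-lam) (tensorW (pf1 a) φL)))
          (orthW (smulW lam (tensorW (pf1 a) φL))
            (smulW (-lam) (tensorW (pf1 a) φL))) :=
        QFEquiv.orth hiso (QFEquiv.refl _)
      have c4 : smulW (-lam) (tensorW (pf1 a) φL)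
          = smulW (-1) (smulW lam (tensorW (pf1 a) φL)) := by
        funext p; simp only [smulW]; ring
      have hWnz : ∀ p : Fin 2 × Fin r, smulW lam (tensorW (pf1 a) φL) p ≠ 0 := by
        rintro ⟨s, i⟩
        exact mul_ne_zero hlam (mul_ne_zero (pf1_ne_zero ha s) (hφLnz i))
      have c5 := split_pm h2L hWnz
      have c6 := QFEquiv.const_pm_hyp (F := L) (ι := Fin 2 × Fin r)
      refine ⟨0, Fintype.card (Fin 2 × Fin r), ?_⟩
      refine (orth_empty_hyp _).trans ?_
      refine (c1.trans ?_)
      rw [c2]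
      refine c3.trans ?_
      rw [c4]
      exact c5.trans c6
    have hcard : Fintype.card (Fin r ⊕ Fin r) = 2 * r := by simp; ring
    obtain ⟨x, y, u, hu, hn, hprod⟩ :=
      mainLemma h2L ha hsq r (Fin r ⊕ Fin r) _ ψ hcard hψnz hsplit
    -- compute the discriminant of ψ
    obtain ⟨x₀, hx₀, hd⟩ := hdisc
    obtain ⟨x₀', hx₀', hd'⟩ := hdisc'
    set e := r * (r - 1) / 2 with hedef
    set X₀ : L := algebraMap k L x₀ with hX₀def
    set X₀' : L := algebraMap k L x₀' with hX₀'def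
    have hX₀nz : X₀ ≠ 0 := fun h0 => hx₀ (hinj (by rw [map_zero]; exact h0))
    have hX₀'nz : X₀' ≠ 0 := fun h0 => hx₀' (hinj (by rw [map_zero]; exact h0))
    have hA2 : ((-1 : L) ^ e) ^ 2 = 1 := by
      rw [← pow_mul, mul_comm e 2, pow_mul]
      norm_num
    have hdL : (-1 : L) ^ e * ∏ i, φL i = X₀ ^ 2 := by
      have := congrArg (algebraMap k L) hd
      rw [map_mul, map_pow, map_neg, map_one, map_prod, map_pow] at this
      exact this
    have hdL' : (-1 : L) ^ e * ∏ i, φL' i = X₀' ^ 2 := by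
      have := congrArg (algebraMap k L) hd'
      rw [map_mul, map_pow, map_neg, map_one, map_prod, map_pow] at this
      exact this
    have hPφ : ∏ i, φL i = (-1 : L) ^ e * X₀ ^ 2 := by
      linear_combination ((-1 : L) ^ e) * hdL - (∏ i, φL i) * hA2
    have hPφ' : ∏ i, φL' i = (-1 : L) ^ e * X₀' ^ 2 := by
      linear_combination ((-1 : L) ^ e) * hdL' - (∏ i, φL' i) * hA2
    have hPψ : ∏ i, ψ i = (∏ i, φL' i) * ((-lam) ^ r * ∏ i, φL i) := by
      rw [hψdef, Fintype.prod_sum_type]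
      have hsecond : ∏ i : Fin r, orthW φL' (smulW (-lam) φL) (Sum.inr i)
          = (-lam) ^ r * ∏ i, φL i := by
        rw [show (fun i : Fin r => orthW φL' (smulW (-lam) φL) (Sum.inr i))
            = fun i : Fin r => -lam * φL i from rfl]
        rw [Finset.prod_mul_distrib, Finset.prod_const, Finset.card_univ, Fintype.card_fin]
      rw [hsecond]
      rfl
    have hneglam : (-lam) ^ r = -(lam ^ r) := Odd.neg_pow hr lam
    have hnegone : (-1 : L) ^ r = -1 := Odd.neg_one_pow hr
    obtain ⟨e', he'⟩ := hr
    have hlamr : lam ^ r = (lam ^ e') ^ 2 * lam := by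
      rw [he', pow_succ, mul_comm 2 e', pow_mul]
    -- combine
    have hmain : lam * (lam ^ e' * X₀ * X₀') ^ 2 = (x ^ 2 - a * y ^ 2) * u ^ 2 := by
      have h1 : ∏ i, ψ i = -((lam ^ e') ^ 2 * lam) * ((-1 : L) ^ e * X₀' ^ 2)
          * ((-1 : L) ^ e * X₀ ^ 2) := by
        rw [hPψ, hPφ, hPφ', hneglam, hlamr]
        ring
      have h2' : ∏ i, ψ i = -(x ^ 2 - a * y ^ 2) * u ^ 2 := by
        rw [hprod, hnegone]
        ring
      rw [h2'] at h1
      linear_combination h1 - ((lam ^ e') ^ 2 * lam * X₀ ^ 2 * X₀' ^ 2) * hA2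
    set D : L := lam ^ e' * X₀ * X₀' with hDdef
    have hDnz : D ≠ 0 :=
      mul_ne_zero (mul_ne_zero (pow_ne_zero _ hlam) hX₀nz) hX₀'nz
    have hxy : lam = (x * u / D) ^ 2 - a * (y * u / D) ^ 2 := by
      field_simp
      linear_combination hmain
    exact finale h2L ha hlam hxy φL φL' hiso
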